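/- arXiv:1609.01406 — 6 statements merged into one kernel-verified Lean document; each statement's English description precedes it below -/
import Mathlib

section
/- For a connected bipartite graph G on n vertices, GG(G) = √(n−2) · NGG(G), where GG(G) = Σ_{uv∈E(G)} √((n_u+n_v−2)/(n_u n_v)) and NGG(G) = Σ_{uv∈E(G)} 1/√(n_u n_v). -/
open Finset Real
open scoped Classical

/-- The number of vertices strictly closer to `u` than to `v`. -/
noncomputable def closerCount {V : Type*} (G : SimpleGraph V) [Fintype V] (u v : V) : ℕ :=
  (Finset.univ.filter (fun w => G.dist w u < G.dist w v)).card

/-- The normalized Graovac–Ghorbani index `NGG(G) = Σ_{uv ∈ E(G)} 1/√(n_u n_v)`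
(each unordered edge counted once, via half the sum over ordered adjacent pairs). -/
noncomputable def NGG {V : Type*} (G : SimpleGraph V) [Fintype V] : ℝ :=
  (∑ u : V, ∑ v : V, if G.Adj u v then
      1 / Real.sqrt ((closerCount G u v : ℝ) * (closerCount G v u : ℝ)) else 0) / 2

/-- The Graovac–Ghorbani index `GG(G) = Σ_{uv ∈ E(G)} √((n_u + n_v - 2)/(n_u n_v))`. -/
noncomputable def GG {V : Type*} (G : SimpleGraph V) [Fintype V] : ℝ :=
  (∑ u : V, ∑ v : V, if G.Adj u v then
      Real.sqrt (((closerCount G u v : ℝ) + (closerCount G v u : ℝ) - 2) /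
        ((closerCount G u v : ℝ) * (closerCount G v u : ℝ))) else 0) / 2

lemma dist_ne_of_adj {V : Type*} [Fintype V] (G : SimpleGraph V) (hconn : G.Connected)
    (hbip : G.Colorable 2) {u v : V} (huv : G.Adj u v) (w : V) :
    G.dist w u ≠ G.dist w v := by
  obtain ⟨C⟩ := hbip
  set c : V → ZMod 2 := fun x => ((C x : ℕ) : ZMod 2) with hc
  have hadj : ∀ {x y : V}, G.Adj x y → c y = c x + 1 := by
    intro x y hxy
    have h1 : C x ≠ C y := C.valid hxy
    have : ∀ a b : Fin 2, a ≠ b → ((b : ℕ) : ZMod 2) = ((a : ℕ) : ZMod 2) + 1 := by decide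
    exact this _ _ h1
  have hwalk : ∀ {a b : V} (p : G.Walk a b), c b = c a + (p.length : ZMod 2) := by
    intro a b p
    induction p with
    | nil => simp
    | cons h p ih =>
      rw [SimpleGraph.Walk.length_cons]
      push_cast
      rw [ih, hadj h]; ring
  have hdist : ∀ a b : V, c b = c a + (G.dist a b : ZMod 2) := by
    intro a b
    obtain ⟨p, hp⟩ := hconn.exists_walk_length_eq_dist a b
    rw [hwalk p, hp]
  intro h
  have h1 := hdist w u
  have h2 := hdist w v
  rw [h] at h1
  have : c u = c v := h1.trans h2.symm
  have h3 : C u ≠ C v := C.valid huv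
  have : ∀ a b : Fin 2, a ≠ b → ((a : ℕ) : ZMod 2) ≠ ((b : ℕ) : ZMod 2) := by decide
  exact this _ _ h3 ‹c u = c v›

lemma closer_sum {V : Type*} [Fintype V] (G : SimpleGraph V) (hconn : G.Connected)
    (hbip : G.Colorable 2) {u v : V} (huv : G.Adj u v) :
    closerCount G u v + closerCount G v u = Fintype.card V := by
  unfold closerCount
  have : (Finset.univ.filter (fun w => G.dist w v < G.dist w u)) =
      (Finset.univ.filter (fun w => ¬ G.dist w u < G.dist w v)) := by
    apply Finset.filter_congr
    intro w _
    have hne := dist_ne_of_adj G hconn hbip huv w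
    constructor
    · intro h; omega
    · intro h; omega
  rw [this]
  simpa using Finset.card_filter_add_card_filter_not
    (s := (Finset.univ : Finset V)) (p := fun w => G.dist w u < G.dist w v)

lemma closer_pos {V : Type*} [Fintype V] (G : SimpleGraph V) {u v : V} (huv : G.Adj u v) :
    1 ≤ closerCount G u v := by
  have hu : u ∈ Finset.univ.filter (fun w => G.dist w u < G.dist w v) := by
    simp only [Finset.mem_filter, Finset.mem_univ, true_and]
    rw [SimpleGraph.dist_self]
    have : G.dist u v = 1 := (SimpleGraph.dist_eq_one_iff_adj).2 huv
    omega
  exact Finset.card_pos.2 ⟨u, hu⟩ 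

/-- For a connected bipartite graph on `n ≥ 2` vertices, `GG(G) = √(n-2) · NGG(G)`. -/
theorem stmt_2 {V : Type*} [Fintype V] (G : SimpleGraph V) (hconn : G.Connected)
    (hbip : G.Colorable 2) (hn : 2 ≤ Fintype.card V) :
    GG G = Real.sqrt ((Fintype.card V : ℝ) - 2) * NGG G := by
  unfold GG NGG
  rw [eq_comm, ← mul_div_assoc]
  congr 1
  rw [Finset.mul_sum]
  apply Finset.sum_congr rfl
  intro u _
  rw [Finset.mul_sum]
  apply Finset.sum_congr rfl
  intro v _
  by_cases h : G.Adj u v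
  · simp only [h, if_true]
    have hsum : (closerCount G u v : ℝ) + (closerCount G v u : ℝ) = (Fintype.card V : ℝ) := by
      have := closer_sum G hconn hbip h
      push_cast [← this]; ring
    rw [hsum]
    have hn2 : (0:ℝ) ≤ (Fintype.card V : ℝ) - 2 := by
      have : (2:ℝ) ≤ (Fintype.card V : ℝ) := by exact_mod_cast hn
      linarith
    rw [Real.sqrt_div hn2]; ring
  · simp [h]
end

section
/- The limit as n → ∞ of Σ_{i=1}^{n−1} 1/√(i(n−i)) equals π. -/
open Filter Finset

noncomputable def Fa (n x : ℝ) : ℝ := Real.arcsin ((2 * x - n) / n)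

lemma hasDerivAt_Fa {n : ℝ} (hn : 0 < n) {x : ℝ} (hx0 : 0 < x) (hxn : x < n) :
    HasDerivAt (Fa n) (1 / Real.sqrt (x * (n - x))) x := by
  have hne : n ≠ 0 := hn.ne'
  have hu : HasDerivAt (fun x : ℝ => (2 * x - n) / n) (2 / n) x := by
    have : HasDerivAt (fun x : ℝ => 2 * x - n) 2 x := by
      simpa using ((hasDerivAt_id x).const_mul (2:ℝ)).sub_const n
    exact this.div_const n
  have h1 : (2 * x - n) / n ≠ -1 := by
    intro h; rw [div_eq_iff hne] at h; nlinarith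
  have h2 : (2 * x - n) / n ≠ 1 := by
    intro h; rw [div_eq_iff hne] at h; nlinarith
  have hcomp := (Real.hasDerivAt_arcsin h1 h2).comp x hu
  have hxpos : 0 < x * (n - x) := by nlinarith
  refine HasDerivAt.congr_deriv (f := Fa n) hcomp ?_
  have key : 1 - ((2 * x - n) / n) ^ 2 = (2 / n) ^ 2 * (x * (n - x)) := by
    field_simp; ring
  rw [key, Real.sqrt_mul (by positivity : (0:ℝ) ≤ (2/n)^2), Real.sqrt_sq (by positivity : (0:ℝ) ≤ 2/n)]
  have hs1 : Real.sqrt x ≠ 0 := (Real.sqrt_pos.2 hx0).ne'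
  have hs2 : Real.sqrt (n - x) ≠ 0 := (Real.sqrt_pos.2 (by linarith)).ne'
  field_simp

lemma Fa_slope {n : ℝ} (hn : 0 < n) {a : ℝ} (ha : 0 ≤ a) (hab : a + 1 ≤ n) :
    ∃ c ∈ Set.Ioo a (a + 1), Fa n (a + 1) - Fa n a = 1 / Real.sqrt (c * (n - c)) := by
  have hcont : ContinuousOn (Fa n) (Set.Icc a (a + 1)) := by
    apply Continuous.continuousOn
    exact Real.continuous_arcsin.comp (by continuity)
  obtain ⟨c, hc, hceq⟩ := exists_hasDerivAt_eq_slope (Fa n)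
    (fun x => 1 / Real.sqrt (x * (n - x))) (by linarith : a < a + 1) hcont
    (fun x hx => hasDerivAt_Fa hn (lt_of_le_of_lt ha hx.1) (lt_of_lt_of_le hx.2 hab))
  refine ⟨c, hc, ?_⟩
  rw [hceq, show a + 1 - a = (1:ℝ) by ring, div_one]

lemma tele (g : ℕ → ℝ) (a : ℕ) : ∀ b, a ≤ b + 1 →
    ∑ i ∈ Icc a b, (g (i + 1) - g i) = g (b + 1) - g a := by
  intro b
  induction b with
  | zero => intro h; interval_cases a <;> simp
  | succ b ih =>
    intro h
    rcases Nat.lt_or_ge a (b + 2) with h' | h'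
    · rw [Finset.sum_Icc_succ_top (by omega), ih (by omega)]; ring
    · have : a = b + 2 := by omega
      subst this
      rw [Finset.Icc_eq_empty (by omega)]; simp

lemma tele2 (g : ℕ → ℝ) (a : ℕ) (h1 : 1 ≤ a) : ∀ b, a ≤ b + 1 →
    ∑ i ∈ Icc a b, (g i - g (i - 1)) = g b - g (a - 1) := by
  intro b
  induction b with
  | zero =>
    intro h
    have : a = 1 := by omega
    subst this; simp
  | succ b ih =>
    intro h
    rcases Nat.lt_or_ge a (b + 2) with h' | h'
    · rw [Finset.sum_Icc_succ_top (by omega), ih (by omega)]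
      have hb : b + 1 - 1 = b := rfl
      rw [hb]; ring
    · have : a = b + 2 := by omega
      subst this
      rw [Finset.Icc_eq_empty (by omega)]; simp
lemma upper (n : ℕ) (hn : 4 ≤ n) :
    ∑ i ∈ Finset.Icc 1 (n - 1),
        1 / Real.sqrt ((i : ℝ) * ((n : ℝ) - (i : ℝ))) ≤ Real.pi := by
  set m := n / 2 with hmdef
  have hm1 : 2 * m ≤ n := by omega
  have hm2 : n ≤ 2 * m + 1 := by omega
  have hm3 : 2 ≤ m := by omega
  have hN : (0:ℝ) < (n:ℝ) := by exact_mod_cast (by omega : 0 < n)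
  have hm1R : 2 * (m:ℝ) ≤ (n:ℝ) := by exact_mod_cast hm1
  have hm2R : (n:ℝ) ≤ 2 * (m:ℝ) + 1 := by exact_mod_cast hm2
  have hm3R : (2:ℝ) ≤ (m:ℝ) := by exact_mod_cast hm3
  set g : ℕ → ℝ := fun k => Fa (n:ℝ) (k:ℝ) with hgdef
  -- termwise bounds
  have key1 : ∀ i ∈ Finset.Icc 1 m,
      1 / Real.sqrt ((i : ℝ) * ((n : ℝ) - (i : ℝ))) ≤ g i - g (i - 1) := by
    intro i hi
    rw [Finset.mem_Icc] at hi
    have hiR : (1:ℝ) ≤ (i:ℝ) := by exact_mod_cast hi.1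
    have himR : (i:ℝ) ≤ (m:ℝ) := by exact_mod_cast hi.2
    obtain ⟨c, hc, hceq⟩ := Fa_slope hN (a := (i:ℝ) - 1) (by linarith)
      (by nlinarith)
    have hcast : ((i - 1 : ℕ) : ℝ) = (i:ℝ) - 1 := by
      have := hi.1; push_cast [this]; ring
    have heq : g i - g (i - 1) = 1 / Real.sqrt (c * ((n:ℝ) - c)) := by
      rw [hgdef]; dsimp only; rw [hcast, ← hceq,
        show ((i:ℝ) - 1) + 1 = (i:ℝ) by ring]
    have hc1 : (i:ℝ) - 1 < c := hc.1
    have hc2 : c < (i:ℝ) := by have := hc.2; linarith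
    have hcpos : 0 < c * ((n:ℝ) - c) := by nlinarith
    have hle : c * ((n:ℝ) - c) ≤ (i:ℝ) * ((n:ℝ) - (i:ℝ)) := by
      nlinarith [mul_pos (sub_pos.2 hc2) (show (0:ℝ) < (n:ℝ) - (i:ℝ) - c by nlinarith)]
    rw [heq]
    exact one_div_le_one_div_of_le (Real.sqrt_pos.2 hcpos) (Real.sqrt_le_sqrt hle)
  have key2 : ∀ i ∈ Finset.Icc (m + 1) (n - 1),
      1 / Real.sqrt ((i : ℝ) * ((n : ℝ) - (i : ℝ))) ≤ g (i + 1) - g i := by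
    intro i hi
    rw [Finset.mem_Icc] at hi
    have himR : (m:ℝ) + 1 ≤ (i:ℝ) := by exact_mod_cast hi.1
    have hiR : (i:ℝ) + 1 ≤ (n:ℝ) := by
      have h' : i + 1 ≤ n := by omega
      exact_mod_cast h'
    obtain ⟨c, hc, hceq⟩ := Fa_slope hN (a := (i:ℝ)) (by linarith) hiR
    have heq : g (i + 1) - g i = 1 / Real.sqrt (c * ((n:ℝ) - c)) := by
      rw [hgdef]; dsimp only; rw [← hceq]; push_cast; ring_nf
    have hc1 : (i:ℝ) < c := hc.1
    have hc2 : c < (i:ℝ) + 1 := hc.2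
    have hcpos : 0 < c * ((n:ℝ) - c) := by nlinarith
    have hle : c * ((n:ℝ) - c) ≤ (i:ℝ) * ((n:ℝ) - (i:ℝ)) := by
      nlinarith [mul_pos (sub_pos.2 hc1) (show (0:ℝ) < c + (i:ℝ) - (n:ℝ) by nlinarith)]
    rw [heq]
    exact one_div_le_one_div_of_le (Real.sqrt_pos.2 hcpos) (Real.sqrt_le_sqrt hle)
  -- split the sum
  have e1 : Finset.Icc 1 (n - 1) = Finset.Ioc 0 (n - 1) := Finset.Icc_add_one_left_eq_Ioc 0 (n - 1)
  have e2 : Finset.Icc 1 m = Finset.Ioc 0 m := Finset.Icc_add_one_left_eq_Ioc 0 m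
  have e3 : Finset.Icc (m + 1) (n - 1) = Finset.Ioc m (n - 1) := Finset.Icc_add_one_left_eq_Ioc m (n - 1)
  have hsplit : ∑ i ∈ Finset.Icc 1 (n - 1), 1 / Real.sqrt ((i : ℝ) * ((n : ℝ) - (i : ℝ)))
      = ∑ i ∈ Finset.Icc 1 m, 1 / Real.sqrt ((i : ℝ) * ((n : ℝ) - (i : ℝ)))
      + ∑ i ∈ Finset.Icc (m + 1) (n - 1), 1 / Real.sqrt ((i : ℝ) * ((n : ℝ) - (i : ℝ))) := by
    rw [e1, e2, e3]
    exact (Finset.sum_Ioc_consecutive _ (by omega) (by omega)).symm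
  have t1 := tele2 g 1 le_rfl m (by omega)
  have t2 := tele g (m + 1) (n - 1) (by omega)
  rw [show n - 1 + 1 = n by omega] at t2
  have b1 : ∑ i ∈ Finset.Icc 1 m, 1 / Real.sqrt ((i : ℝ) * ((n : ℝ) - (i : ℝ)))
      ≤ g m - g 0 := by
    rw [show g m - g 0 = g m - g (1 - 1) from rfl, ← t1]
    exact Finset.sum_le_sum key1
  have b2 : ∑ i ∈ Finset.Icc (m + 1) (n - 1), 1 / Real.sqrt ((i : ℝ) * ((n : ℝ) - (i : ℝ)))
      ≤ g n - g (m + 1) := by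
    rw [← t2]
    exact Finset.sum_le_sum key2
  have hmono : g m ≤ g (m + 1) := by
    rw [hgdef]; dsimp only [Fa]
    apply Real.monotone_arcsin
    apply (div_le_div_iff_of_pos_right hN).2
    push_cast; linarith
  have hg0 : g 0 = -(Real.pi / 2) := by
    rw [hgdef]; dsimp only [Fa]
    rw [show (2 * ((0:ℕ):ℝ) - (n:ℝ)) / (n:ℝ) = -1 by
      rw [div_eq_iff hN.ne']; push_cast; ring, Real.arcsin_neg_one]
  have hgn : g n = Real.pi / 2 := by
    rw [hgdef]; dsimp only [Fa]
    rw [show (2 * ((n:ℕ):ℝ) - (n:ℝ)) / (n:ℝ) = 1 by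
      rw [div_eq_iff hN.ne']; push_cast; ring, Real.arcsin_one]
  linarith
set_option maxHeartbeats 1000000 in
lemma lower (n : ℕ) (hn : 4 ≤ n) :
    2 * Real.arcsin (((n:ℝ) - 2) / (n:ℝ)) - 2 / Real.sqrt ((n:ℝ)^2 - 4)
      ≤ ∑ i ∈ Finset.Icc 1 (n - 1),
          1 / Real.sqrt ((i : ℝ) * ((n : ℝ) - (i : ℝ))) := by
  set m := n / 2 with hmdef
  have hm1 : 2 * m ≤ n := by omega
  have hm2 : n ≤ 2 * m + 1 := by omega
  have hm3 : 2 ≤ m := by omega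
  have hN : (0:ℝ) < (n:ℝ) := by exact_mod_cast (by omega : 0 < n)
  have hnR : (4:ℝ) ≤ (n:ℝ) := by exact_mod_cast hn
  have hm1R : 2 * (m:ℝ) ≤ (n:ℝ) := by exact_mod_cast hm1
  have hm2R : (n:ℝ) ≤ 2 * (m:ℝ) + 1 := by exact_mod_cast hm2
  have hm3R : (2:ℝ) ≤ (m:ℝ) := by exact_mod_cast hm3
  set g : ℕ → ℝ := fun k => Fa (n:ℝ) (k:ℝ) with hgdef
  -- middle gap
  have h4 : (0:ℝ) < (n:ℝ)^2 - 4 := by nlinarith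
  have hmid : g (m + 1) - g m ≤ 2 / Real.sqrt ((n:ℝ)^2 - 4) := by
    obtain ⟨c, hc, hceq⟩ := Fa_slope hN (a := (m:ℝ)) (by positivity) (by
      have h' : m + 1 ≤ n := by omega
      exact_mod_cast h')
    have heq : g (m + 1) - g m = 1 / Real.sqrt (c * ((n:ℝ) - c)) := by
      rw [hgdef]; dsimp only; rw [← hceq]; push_cast; ring_nf
    have hc1 : (m:ℝ) < c := hc.1
    have hc2 : c < (m:ℝ) + 1 := hc.2
    have h5 : -1 ≤ 2 * c - (n:ℝ) := by linarith
    have h6 : 2 * c - (n:ℝ) ≤ 2 := by linarith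
    have h7 : (2 * c - (n:ℝ))^2 ≤ 4 := by
      have := sq_le_sq' (by linarith : -(2:ℝ) ≤ 2 * c - (n:ℝ)) h6
      norm_num at this; linarith
    have h8 : 4 * c * ((n:ℝ) - c) = (n:ℝ)^2 - (2 * c - (n:ℝ))^2 := by ring
    have hc3 : ((n:ℝ)^2 - 4) / 4 ≤ c * ((n:ℝ) - c) := by linarith
    have hsq : Real.sqrt ((n:ℝ)^2 - 4) / 2 ≤ Real.sqrt (c * ((n:ℝ) - c)) := by
      rw [Real.le_sqrt (by positivity) (by nlinarith)]
      rw [div_pow, Real.sq_sqrt h4.le]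
      convert hc3 using 2
      norm_num
    have hpos2 : (0:ℝ) < Real.sqrt ((n:ℝ)^2 - 4) / 2 := by
      have := Real.sqrt_pos.2 h4; positivity
    rw [heq]
    calc 1 / Real.sqrt (c * ((n:ℝ) - c)) ≤ 1 / (Real.sqrt ((n:ℝ)^2 - 4) / 2) :=
          one_div_le_one_div_of_le hpos2 hsq
      _ = 2 / Real.sqrt ((n:ℝ)^2 - 4) := one_div_div _ _
  -- termwise bounds
  have key1 : ∀ i ∈ Finset.Icc 1 (m - 1),
      g (i + 1) - g i ≤ 1 / Real.sqrt ((i : ℝ) * ((n : ℝ) - (i : ℝ))) := by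
    intro i hi
    rw [Finset.mem_Icc] at hi
    have hiR : (1:ℝ) ≤ (i:ℝ) := by exact_mod_cast hi.1
    have himR : (i:ℝ) + 1 ≤ (m:ℝ) := by
      have h' : i + 1 ≤ m := by omega
      exact_mod_cast h'
    obtain ⟨c, hc, hceq⟩ := Fa_slope hN (a := (i:ℝ)) (by linarith) (by linarith)
    have heq : g (i + 1) - g i = 1 / Real.sqrt (c * ((n:ℝ) - c)) := by
      rw [hgdef]; dsimp only; rw [← hceq]; push_cast; ring_nf
    have hc1 : (i:ℝ) < c := hc.1
    have hc2 : c < (i:ℝ) + 1 := hc.2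
    have hipos : 0 < (i:ℝ) * ((n:ℝ) - (i:ℝ)) := by nlinarith
    have hle : (i:ℝ) * ((n:ℝ) - (i:ℝ)) ≤ c * ((n:ℝ) - c) := by
      nlinarith [mul_pos (sub_pos.2 hc1) (show (0:ℝ) < (n:ℝ) - c - (i:ℝ) by nlinarith)]
    rw [heq]
    exact one_div_le_one_div_of_le (Real.sqrt_pos.2 hipos) (Real.sqrt_le_sqrt hle)
  have key2 : ∀ i ∈ Finset.Icc (m + 2) (n - 1),
      g i - g (i - 1) ≤ 1 / Real.sqrt ((i : ℝ) * ((n : ℝ) - (i : ℝ))) := by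
    intro i hi
    rw [Finset.mem_Icc] at hi
    have himR : (m:ℝ) + 2 ≤ (i:ℝ) := by exact_mod_cast hi.1
    have hiR : (i:ℝ) + 1 ≤ (n:ℝ) := by
      have h' : i + 1 ≤ n := by omega
      exact_mod_cast h'
    obtain ⟨c, hc, hceq⟩ := Fa_slope hN (a := (i:ℝ) - 1) (by linarith) (by linarith)
    have hcast : ((i - 1 : ℕ) : ℝ) = (i:ℝ) - 1 := by
      have h' : 1 ≤ i := by omega
      push_cast [h']; ring
    have heq : g i - g (i - 1) = 1 / Real.sqrt (c * ((n:ℝ) - c)) := by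
      rw [hgdef]; dsimp only; rw [hcast, ← hceq,
        show ((i:ℝ) - 1) + 1 = (i:ℝ) by ring]
    have hc1 : (i:ℝ) - 1 < c := hc.1
    have hc2 : c < (i:ℝ) := by have := hc.2; linarith
    have hipos : 0 < (i:ℝ) * ((n:ℝ) - (i:ℝ)) := by nlinarith
    have hle : (i:ℝ) * ((n:ℝ) - (i:ℝ)) ≤ c * ((n:ℝ) - c) := by
      nlinarith [mul_pos (sub_pos.2 hc2) (show (0:ℝ) < c + (i:ℝ) - (n:ℝ) by nlinarith)]
    rw [heq]
    exact one_div_le_one_div_of_le (Real.sqrt_pos.2 hipos) (Real.sqrt_le_sqrt hle)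
  -- split the sum and drop the middle terms
  have e1 : Finset.Icc 1 (n - 1) = Finset.Ioc 0 (n - 1) := Finset.Icc_add_one_left_eq_Ioc 0 (n - 1)
  have e2 : Finset.Icc 1 (m - 1) = Finset.Ioc 0 (m - 1) := Finset.Icc_add_one_left_eq_Ioc 0 (m - 1)
  have e3 : Finset.Icc m (n - 1) = Finset.Ioc (m - 1) (n - 1) := by
    rw [show m = (m - 1) + 1 by omega]
    exact Finset.Icc_add_one_left_eq_Ioc (m - 1) (n - 1)
  have hsplit : ∑ i ∈ Finset.Icc 1 (n - 1), 1 / Real.sqrt ((i : ℝ) * ((n : ℝ) - (i : ℝ)))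
      = ∑ i ∈ Finset.Icc 1 (m - 1), 1 / Real.sqrt ((i : ℝ) * ((n : ℝ) - (i : ℝ)))
      + ∑ i ∈ Finset.Icc m (n - 1), 1 / Real.sqrt ((i : ℝ) * ((n : ℝ) - (i : ℝ))) := by
    rw [e1, e2, e3]
    exact (Finset.sum_Ioc_consecutive _ (by omega) (by omega)).symm
  have hdrop : ∑ i ∈ Finset.Icc (m + 2) (n - 1), 1 / Real.sqrt ((i : ℝ) * ((n : ℝ) - (i : ℝ)))
      ≤ ∑ i ∈ Finset.Icc m (n - 1), 1 / Real.sqrt ((i : ℝ) * ((n : ℝ) - (i : ℝ))) := by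
    apply Finset.sum_le_sum_of_subset_of_nonneg (Finset.Icc_subset_Icc (by omega) le_rfl)
    intro i _ _
    positivity
  have tA := tele g 1 (m - 1) (by omega)
  rw [show m - 1 + 1 = m by omega] at tA
  have tB := tele2 g (m + 2) (by omega) (n - 1) (by omega)
  rw [show m + 2 - 1 = m + 1 by omega] at tB
  have b1 : g m - g 1 ≤ ∑ i ∈ Finset.Icc 1 (m - 1),
      1 / Real.sqrt ((i : ℝ) * ((n : ℝ) - (i : ℝ))) := by
    rw [← tA]; exact Finset.sum_le_sum key1
  have b2 : g (n - 1) - g (m + 1) ≤ ∑ i ∈ Finset.Icc (m + 2) (n - 1),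
      1 / Real.sqrt ((i : ℝ) * ((n : ℝ) - (i : ℝ))) := by
    rw [← tB]; exact Finset.sum_le_sum key2
  -- endpoint values
  have hg1 : g 1 = -Real.arcsin (((n:ℝ) - 2) / (n:ℝ)) := by
    rw [hgdef]; dsimp only [Fa]
    rw [show (2 * ((1:ℕ):ℝ) - (n:ℝ)) / (n:ℝ) = -(((n:ℝ) - 2) / (n:ℝ)) by
      push_cast; ring, Real.arcsin_neg]
  have hgn1 : g (n - 1) = Real.arcsin (((n:ℝ) - 2) / (n:ℝ)) := by
    rw [hgdef]; dsimp only [Fa]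
    have hcast : ((n - 1 : ℕ) : ℝ) = (n:ℝ) - 1 := by
      push_cast [Nat.cast_sub (by omega : 1 ≤ n)]; ring
    rw [hcast, show (2 * ((n:ℝ) - 1) - (n:ℝ)) / (n:ℝ) = ((n:ℝ) - 2) / (n:ℝ) by ring]
  linarith

open Filter in
/-- `lim_{n → ∞} Σ_{i=1}^{n-1} 1/√(i(n-i)) = π`. -/
theorem stmt_4 :
    Tendsto (fun n : ℕ => ∑ i ∈ Finset.Icc 1 (n - 1),
        1 / Real.sqrt ((i : ℝ) * ((n : ℝ) - (i : ℝ)))) atTop (nhds Real.pi) := by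
  have h1 : Tendsto (fun n : ℕ => ((n:ℝ) - 2) / (n:ℝ)) atTop (nhds 1) := by
    have h0 : Tendsto (fun n : ℕ => 1 - 2 / (n:ℝ)) atTop (nhds 1) := by
      simpa using tendsto_const_nhds.sub (tendsto_const_div_atTop_nhds_zero_nat (2:ℝ))
    apply h0.congr'
    filter_upwards [eventually_ge_atTop 1] with n hn
    have hn' : (n:ℝ) ≠ 0 := by
      have : (0:ℝ) < (n:ℝ) := by exact_mod_cast hn
      exact this.ne'
    rw [sub_div, div_self hn']
  have h2 : Tendsto (fun n : ℕ => Real.arcsin (((n:ℝ) - 2) / (n:ℝ))) atTop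
      (nhds (Real.pi / 2)) := by
    have := (Real.continuous_arcsin.tendsto 1).comp h1
    rwa [Real.arcsin_one] at this
  have h3 : Tendsto (fun n : ℕ => 2 / Real.sqrt ((n:ℝ)^2 - 4)) atTop (nhds 0) := by
    apply tendsto_of_tendsto_of_tendsto_of_le_of_le' tendsto_const_nhds
      (tendsto_const_div_atTop_nhds_zero_nat 4)
    · filter_upwards with n; positivity
    · filter_upwards [eventually_ge_atTop 4] with n hn
      have hnR : (4:ℝ) ≤ (n:ℝ) := by exact_mod_cast hn
      have hs : (n:ℝ) / 2 ≤ Real.sqrt ((n:ℝ)^2 - 4) := by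
        rw [Real.le_sqrt (by positivity) (by nlinarith)]
        nlinarith
      calc 2 / Real.sqrt ((n:ℝ)^2 - 4) ≤ 2 / ((n:ℝ) / 2) :=
            div_le_div_of_nonneg_left (by norm_num) (by positivity) hs
        _ = 4 / (n:ℝ) := by rw [div_div_eq_mul_div]; norm_num
  have hL : Tendsto (fun n : ℕ => 2 * Real.arcsin (((n:ℝ) - 2) / (n:ℝ))
      - 2 / Real.sqrt ((n:ℝ)^2 - 4)) atTop (nhds Real.pi) := by
    have := (h2.const_mul 2).sub h3
    rwa [show 2 * (Real.pi / 2) - 0 = Real.pi by ring] at this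
  apply tendsto_of_tendsto_of_tendsto_of_le_of_le' hL tendsto_const_nhds
  · filter_upwards [eventually_ge_atTop 4] with n hn using lower n hn
  · filter_upwards [eventually_ge_atTop 4] with n hn using upper n hn
end

section
/- As n → ∞, GG(P_n) ~ π√(n−2), i.e., the ratio GG(P_n)/(π√(n−2)) tends to 1, where GG(P_n) = √(n−2) · Σ_{i=1}^{n−1} 1/√(i(n−i)). -/
open Filter

noncomputable def gfun (n x : ℝ) : ℝ := 2 * Real.arcsin (Real.sqrt (x/n))
noncomputable def ffun (n x : ℝ) : ℝ := 1 / Real.sqrt (x*(n-x))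

lemma sqrt_mul_sqrt (n x : ℝ) (hn : 0 < n) (hx : 0 ≤ x) :
    Real.sqrt (x/n) * Real.sqrt ((n-x)/n) = Real.sqrt (x*(n-x)) / n := by
  rw [← Real.sqrt_mul (by positivity)]
  rw [div_mul_div_comm, show x*(n-x)/(n*n) = x*(n-x)/n^2 by ring]
  rw [Real.sqrt_div' _ (by positivity), Real.sqrt_sq hn.le]

lemma hasDeriv_gfun (n x : ℝ) (hn : 0 < n) (hx : 0 < x) (hxn : x < n) :
    HasDerivAt (gfun n) (ffun n x) x := by
  have hxn0 : (0:ℝ) < x/n := by positivity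
  have hnx : (0:ℝ) < n - x := by linarith
  have hlt : x/n < 1 := (div_lt_one hn).2 hxn
  have hs1 : Real.sqrt (x/n) ≠ -1 := by
    intro h; have := Real.sqrt_nonneg (x/n); rw [h] at this; linarith
  have hs2 : Real.sqrt (x/n) ≠ 1 := by
    rw [Ne, Real.sqrt_eq_one]; exact ne_of_lt hlt
  have h1 : HasDerivAt (fun y : ℝ => y/n) (1/n) x := by
    simpa using (hasDerivAt_id x).div_const n
  have h2 := (Real.hasDerivAt_sqrt (ne_of_gt hxn0)).comp x h1
  have h3 := (Real.hasDerivAt_arcsin hs1 hs2).comp x h2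
  have h4 := h3.const_mul (2:ℝ)
  convert h4 using 1
  · rfl
  · rfl
  · rfl
  have hsq : Real.sqrt (x/n) ^ 2 = x/n := Real.sq_sqrt hxn0.le
  rw [hsq]
  have h1xn : 1 - x/n = (n-x)/n := by field_simp
  rw [h1xn]
  have key := sqrt_mul_sqrt n x hn hx.le
  have hpos : (0:ℝ) < Real.sqrt (x*(n-x)) := Real.sqrt_pos.2 (by positivity)
  have hpos2 : (0:ℝ) < Real.sqrt (x/n) := Real.sqrt_pos.2 hxn0
  have hpos3 : (0:ℝ) < Real.sqrt ((n-x)/n) := Real.sqrt_pos.2 (by positivity)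
  unfold ffun
  have hA : Real.sqrt (x*(n-x)) = Real.sqrt (x/n) * Real.sqrt ((n-x)/n) * n := by
    rw [key]; field_simp
  rw [hA]; field_simp

lemma ffun_contOn (n a b : ℝ) (ha : 0 < a) (hb : b < n) (hab : a ≤ b) :
    ContinuousOn (ffun n) (Set.uIcc a b) := by
  rw [Set.uIcc_of_le hab]
  apply ContinuousOn.div continuousOn_const
  · exact (Real.continuous_sqrt.comp (by continuity)).continuousOn
  · intro x hx
    obtain ⟨h1, h2⟩ := hx
    have : 0 < x*(n-x) := mul_pos (lt_of_lt_of_le ha h1) (by linarith)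
    exact ne_of_gt (Real.sqrt_pos.2 this)

lemma ftc (n a b : ℝ) (ha : 0 < a) (hb : b < n) (hab : a ≤ b) :
    ∫ x in a..b, ffun n x = gfun n b - gfun n a := by
  have hn : 0 < n := lt_trans (lt_of_lt_of_le ha hab) hb
  apply intervalIntegral.integral_eq_sub_of_hasDerivAt
  · intro x hx
    rw [Set.uIcc_of_le hab] at hx
    exact hasDeriv_gfun n x hn (lt_of_lt_of_le ha hx.1) (lt_of_le_of_lt hx.2 hb)
  · exact (ffun_contOn n a b ha hb hab).intervalIntegrable

lemma int_le_const (n a K : ℝ) (ha : 0 < a) (hb : a + 1 < n)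
    (h : ∀ x ∈ Set.Icc a (a+1), ffun n x ≤ K) :
    ∫ x in a..(a+1), ffun n x ≤ K := by
  have h2 : ∫ x in a..(a+1), ffun n x ≤ ∫ x in a..(a+1), K := by
    apply intervalIntegral.integral_mono_on (by linarith)
    · exact (ffun_contOn n a (a+1) ha hb (by linarith)).intervalIntegrable
    · exact intervalIntegrable_const
    · exact h
  simpa using h2

lemma const_le_int (n a K : ℝ) (ha : 0 < a) (hb : a + 1 < n)
    (h : ∀ x ∈ Set.Icc a (a+1), K ≤ ffun n x) :
    K ≤ ∫ x in a..(a+1), ffun n x := by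
  have h2 : (∫ _x in a..(a+1), (K:ℝ)) ≤ ∫ x in a..(a+1), ffun n x := by
    apply intervalIntegral.integral_mono_on (by linarith)
    · exact intervalIntegrable_const
    · exact (ffun_contOn n a (a+1) ha hb (by linarith)).intervalIntegrable
    · exact h
  simpa using h2

lemma ffun_le (n x i : ℝ) (hi : 0 < i*(n-i)) (h : i*(n-i) ≤ x*(n-x)) :
    ffun n x ≤ ffun n i :=
  one_div_le_one_div_of_le (Real.sqrt_pos.2 hi) (Real.sqrt_le_sqrt h)

lemma lower1 (n i : ℝ) (hi : 1 ≤ i) (h : 2*i+1 ≤ n) :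
    gfun n (i+1) - gfun n i ≤ ffun n i := by
  rw [← ftc n i (i+1) (by linarith) (by linarith) (by linarith)]
  apply int_le_const n i _ (by linarith) (by linarith)
  intro x hx
  obtain ⟨h1, h2⟩ := hx
  apply ffun_le <;> nlinarith [mul_nonneg (by linarith : (0:ℝ) ≤ x - i) (by linarith : (0:ℝ) ≤ n - x - i)]

lemma lower2 (n i : ℝ) (h2 : 2 ≤ i) (hi : n+1 ≤ 2*i) (hn : i < n) :
    gfun n i - gfun n (i-1) ≤ ffun n i := by
  have heq : i - 1 + 1 = i := by ring
  have H := int_le_const n (i-1) (ffun n i) (by linarith) (by linarith) ?_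
  · rw [heq] at H
    rw [← ftc n (i-1) i (by linarith) hn (by linarith)]
    exact H
  · rw [heq]
    intro x hx
    obtain ⟨h1, h3⟩ := hx
    apply ffun_le <;> nlinarith [mul_nonneg (by linarith : (0:ℝ) ≤ i - x) (by linarith : (0:ℝ) ≤ x + i - n)]

lemma upper1 (n i : ℝ) (h2 : 2 ≤ i) (h : 2*i ≤ n) :
    ffun n i ≤ gfun n i - gfun n (i-1) := by
  have heq : i - 1 + 1 = i := by ring
  have H := const_le_int n (i-1) (ffun n i) (by linarith) (by linarith) ?_
  · rw [heq] at H
    rw [← ftc n (i-1) i (by linarith) (by linarith) (by linarith)]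
    exact H
  · rw [heq]
    intro x hx
    obtain ⟨h1, h3⟩ := hx
    apply ffun_le <;> nlinarith [mul_nonneg (by linarith : (0:ℝ) ≤ i - x) (by linarith : (0:ℝ) ≤ n - x - i)]

lemma upper2 (n i : ℝ) (h2 : 1 ≤ i) (h : n ≤ 2*i) (hn : i + 1 < n) :
    ffun n i ≤ gfun n (i+1) - gfun n i := by
  rw [← ftc n i (i+1) (by linarith) (by linarith) (by linarith)]
  apply const_le_int n i _ (by linarith) (by linarith)
  intro x hx
  obtain ⟨h1, h3⟩ := hx
  apply ffun_le <;> nlinarith [mul_nonneg (by linarith : (0:ℝ) ≤ x - i) (by linarith : (0:ℝ) ≤ x + i - n)]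

lemma telescope1 (h : ℕ → ℝ) (a b : ℕ) (hab : a ≤ b + 1) :
    ∑ i ∈ Finset.Icc a b, (h (i+1) - h i) = h (b+1) - h a := by
  rw [← Finset.Ico_add_one_right_eq_Icc, Finset.sum_Ico_eq_sum_range]
  have key := Finset.sum_range_sub (fun j => h (a + j)) (b + 1 - a)
  simp only [add_zero] at key
  rw [show a + (b + 1 - a) = b + 1 from by omega] at key
  rw [← key]
  apply Finset.sum_congr rfl
  intro j _
  congr 1 <;> congr 1 <;> omega

lemma telescope2 (h : ℕ → ℝ) (a b : ℕ) (ha : 1 ≤ a) (hab : a ≤ b + 1) :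
    ∑ i ∈ Finset.Icc a b, (h i - h (i-1)) = h b - h (a-1) := by
  rw [← Finset.Ico_add_one_right_eq_Icc, Finset.sum_Ico_eq_sum_range]
  have key := Finset.sum_range_sub (fun j => h (a - 1 + j)) (b + 1 - a)
  simp only [add_zero] at key
  rw [show a - 1 + (b + 1 - a) = b from by omega] at key
  rw [← key]
  apply Finset.sum_congr rfl
  intro j _
  congr 1 <;> congr 1 <;> omega

lemma ffun_nonneg (n x : ℝ) : 0 ≤ ffun n x := by
  unfold ffun; positivity

lemma gfun_mono (n : ℝ) {x y : ℝ} (hn : 0 < n) (hxy : x ≤ y) :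
    gfun n x ≤ gfun n y := by
  unfold gfun
  have h : Real.sqrt (x/n) ≤ Real.sqrt (y/n) :=
    Real.sqrt_le_sqrt (by gcongr)
  linarith [Real.monotone_arcsin h]

lemma sum_lower (n : ℕ) (hn : 4 ≤ n) :
    gfun n ((n:ℝ)-1) - gfun n 1 ≤ ∑ i ∈ Finset.Icc 1 (n-1), ffun n i := by
  set m := (n-1)/2 with hm
  set k := n/2 + 1 with hk
  have hnR : (0:ℝ) < n := by positivity
  have h1 : ∑ i ∈ Finset.Icc 1 m, ffun n i + ∑ i ∈ Finset.Icc k (n-1), ffun n i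
      ≤ ∑ i ∈ Finset.Icc 1 (n-1), ffun n i := by
    rw [← Finset.sum_union (by
      rw [Finset.disjoint_left]; intro a ha hb
      simp only [Finset.mem_Icc] at ha hb; omega)]
    apply Finset.sum_le_sum_of_subset_of_nonneg
    · intro a ha
      simp only [Finset.mem_union, Finset.mem_Icc] at ha ⊢; omega
    · intro i _ _; exact ffun_nonneg _ _
  have h2 : ∑ i ∈ Finset.Icc 1 m, (gfun n (i+1:ℕ) - gfun n i) ≤
      ∑ i ∈ Finset.Icc 1 m, ffun n i := by
    apply Finset.sum_le_sum
    intro i hi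
    simp only [Finset.mem_Icc] at hi
    have hcond : (2*i+1 : ℕ) ≤ n := by omega
    have := lower1 n i (by exact_mod_cast hi.1) (by exact_mod_cast hcond)
    push_cast
    convert this using 3 <;> push_cast <;> ring
  have h3 : ∑ i ∈ Finset.Icc k (n-1), (gfun n i - gfun n ((i-1:ℕ))) ≤
      ∑ i ∈ Finset.Icc k (n-1), ffun n i := by
    apply Finset.sum_le_sum
    intro i hi
    simp only [Finset.mem_Icc] at hi
    have hc1 : (2:ℕ) ≤ i := by omega
    have hc2 : (n+1:ℕ) ≤ 2*i := by omega
    have hc3 : i < n := by omega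
    have := lower2 n i (by exact_mod_cast hc1) (by exact_mod_cast hc2) (by exact_mod_cast hc3)
    convert this using 3
    · rfl
    push_cast [show (1:ℕ) ≤ i from by omega]
    ring
  rw [telescope1 (fun j => gfun n j) 1 m (by omega)] at h2
  rw [telescope2 (fun j => gfun n j) k (n-1) (by omega) (by omega)] at h3
  have hmono : gfun n ((k-1 : ℕ):ℝ) ≤ gfun n ((m+1 : ℕ):ℝ) := by
    apply gfun_mono n hnR
    have : (k - 1 : ℕ) ≤ m + 1 := by omega
    exact_mod_cast this
  have hcast1 : ((n-1 : ℕ):ℝ) = (n:ℝ) - 1 := by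
    have : (1:ℕ) ≤ n := by omega
    push_cast [this]; ring
  rw [hcast1] at h3
  have hone : ((1:ℕ):ℝ) = (1:ℝ) := by norm_num
  calc gfun n ((n:ℝ)-1) - gfun n 1
      ≤ (gfun n ((m+1:ℕ)) - gfun n ((1:ℕ))) + (gfun n ((n:ℝ)-1) - gfun n ((k-1:ℕ))) := by
        push_cast
        push_cast at hmono
        linarith
    _ ≤ ∑ i ∈ Finset.Icc 1 m, ffun n i + ∑ i ∈ Finset.Icc k (n-1), ffun n i := by
        exact add_le_add h2 h3
    _ ≤ _ := h1

lemma sum_upper (n : ℕ) (hn : 4 ≤ n) :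
    ∑ i ∈ Finset.Icc 1 (n-1), ffun n i ≤
      gfun n ((n:ℝ)-1) - gfun n 1 + 2 / Real.sqrt ((n:ℝ)-1) := by
  set m := n/2 with hm
  have hnR : (0:ℝ) < n := by positivity
  have hsplit : ∑ i ∈ Finset.Icc 1 (n-1), ffun n i =
      ffun n 1 + ∑ i ∈ Finset.Icc 2 m, ffun n i
        + ∑ i ∈ Finset.Icc (m+1) (n-2), ffun n i + ffun n ((n-1:ℕ)) := by
    rw [show Finset.Icc 1 (n-1) = Finset.Ioc 0 (n-1) from (Finset.Icc_add_one_left_eq_Ioc 0 (n-1))]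
    rw [← Finset.sum_Ioc_consecutive _ (show 0 ≤ n-2 by omega) (show n-2 ≤ n-1 by omega)]
    rw [← Finset.sum_Ioc_consecutive _ (show 0 ≤ m by omega) (show m ≤ n-2 by omega)]
    rw [← Finset.sum_Ioc_consecutive _ (show 0 ≤ 1 by omega) (show 1 ≤ m by omega)]
    rw [show Finset.Ioc 0 1 = {1} from rfl]
    rw [show Finset.Ioc 1 m = Finset.Icc 2 m from (Finset.Icc_add_one_left_eq_Ioc 1 m).symm]
    rw [show Finset.Ioc m (n-2) = Finset.Icc (m+1) (n-2) from (Finset.Icc_add_one_left_eq_Ioc m (n-2)).symm]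
    rw [show (n-1) = (n-2)+1 from by omega, show Finset.Ioc (n-2) ((n-2)+1) = {(n-2)+1} from by
      rw [← Finset.Icc_add_one_left_eq_Ioc, Finset.Icc_self]]
    simp
  have hf1 : ffun n ((1:ℕ)) = 1 / Real.sqrt ((n:ℝ)-1) := by
    unfold ffun; norm_num
  have hfn1 : ffun n ((n-1:ℕ)) = 1 / Real.sqrt ((n:ℝ)-1) := by
    unfold ffun
    have hc : ((n-1:ℕ):ℝ) = (n:ℝ)-1 := by
      push_cast [show (1:ℕ) ≤ n from by omega]; ring
    rw [hc]
    norm_num [show (n:ℝ) - ((n:ℝ)-1) = 1 from by ring]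
  have h2 : ∑ i ∈ Finset.Icc 2 m, ffun n i ≤
      ∑ i ∈ Finset.Icc 2 m, (gfun n i - gfun n ((i-1:ℕ))) := by
    apply Finset.sum_le_sum
    intro i hi
    simp only [Finset.mem_Icc] at hi
    have hc1 : (2:ℕ) ≤ i := hi.1
    have hc2 : 2*i ≤ n := by omega
    have := upper1 n i (by exact_mod_cast hc1) (by exact_mod_cast hc2)
    convert this using 3
    · rfl
    push_cast [show (1:ℕ) ≤ i from by omega]
    ring
  have h3 : ∑ i ∈ Finset.Icc (m+1) (n-2), ffun n i ≤
      ∑ i ∈ Finset.Icc (m+1) (n-2), (gfun n ((i+1:ℕ)) - gfun n i) := by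
    apply Finset.sum_le_sum
    intro i hi
    simp only [Finset.mem_Icc] at hi
    have hc1 : (1:ℕ) ≤ i := by omega
    have hc2 : n ≤ 2*i := by omega
    have hc3 : i + 1 < n := by omega
    have := upper2 n i (by exact_mod_cast hc1) (by exact_mod_cast hc2)
      (by exact_mod_cast hc3)
    convert this using 3
    · rfl
    push_cast; ring
  rw [telescope2 (fun j => gfun n j) 2 m (by omega) (by omega)] at h2
  rw [telescope1 (fun j => gfun n j) (m+1) (n-2) (by omega)] at h3
  have hmono : gfun n ((m:ℕ):ℝ) ≤ gfun n ((m+1 : ℕ):ℝ) := by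
    apply gfun_mono n hnR
    exact_mod_cast Nat.le_succ m
  have hcast1 : ((n-2+1 : ℕ):ℝ) = (n:ℝ) - 1 := by
    push_cast [show (2:ℕ) ≤ n from by omega]
    ring
  rw [hcast1] at h3
  rw [show ((2-1:ℕ):ℝ) = 1 from by norm_num] at h2
  rw [hsplit, show ((1:ℕ):ℝ) = (1:ℝ) from by norm_num] at *
  rw [hf1, hfn1]
  have htwo : 1 / Real.sqrt ((n:ℝ)-1) + 1 / Real.sqrt ((n:ℝ)-1) = 2 / Real.sqrt ((n:ℝ)-1) := by
    ring
  linarith [htwo, h2, h3, hmono]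

lemma tendsto_glower :
    Tendsto (fun n : ℕ => gfun n ((n:ℝ)-1) - gfun n 1) atTop (nhds Real.pi) := by
  have hc : Continuous (fun y : ℝ => 2 * Real.arcsin (Real.sqrt y)) := by
    exact continuous_const.mul (Real.continuous_arcsin.comp Real.continuous_sqrt)
  have h1 : Tendsto (fun n : ℕ => ((n:ℝ)-1)/n) atTop (nhds 1) := by
    have h0 : Tendsto (fun n : ℕ => 1 - 1/(n:ℝ)) atTop (nhds 1) := by
      simpa using (tendsto_const_nhds (x := (1:ℝ))).sub tendsto_one_div_atTop_nhds_zero_nat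
    apply h0.congr'
    filter_upwards [eventually_ge_atTop 1] with n hn
    have : (n:ℝ) ≠ 0 := by positivity
    field_simp
  have h2 : Tendsto (fun n : ℕ => 1/(n:ℝ)) atTop (nhds 0) :=
    tendsto_one_div_atTop_nhds_zero_nat
  have H1 : Tendsto (fun n : ℕ => gfun n ((n:ℝ)-1)) atTop (nhds Real.pi) := by
    have := (hc.tendsto 1).comp h1
    simp only [Function.comp_def] at this
    unfold gfun
    convert this using 2
    rw [Real.sqrt_one, Real.arcsin_one]; ring
  have H2 : Tendsto (fun n : ℕ => gfun n 1) atTop (nhds 0) := by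
    have := (hc.tendsto 0).comp h2
    simp only [Function.comp_def] at this
    unfold gfun
    convert this using 2
    rw [Real.sqrt_zero, Real.arcsin_zero]; ring
  simpa using H1.sub H2

lemma tendsto_err : Tendsto (fun n : ℕ => 2 / Real.sqrt ((n:ℝ)-1)) atTop (nhds 0) := by
  have hf : Tendsto (fun n : ℕ => (n:ℝ)-1) atTop atTop :=
    tendsto_atTop_add_const_right atTop (-1) tendsto_natCast_atTop_atTop
  have h : Tendsto (fun n : ℕ => ((n:ℝ)-1)⁻¹) atTop (nhds 0) := hf.inv_tendsto_atTop
  have h2 : Tendsto (fun n : ℕ => (Real.sqrt ((n:ℝ)-1))⁻¹) atTop (nhds 0) := by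
    have := (Real.continuous_sqrt.tendsto 0).comp h
    simp only [Function.comp, Real.sqrt_zero] at this
    apply this.congr
    intro n
    simp [Real.sqrt_inv]
  have h3 := h2.const_mul (2:ℝ)
  simp only [mul_zero] at h3
  apply h3.congr
  intro n
  rw [div_eq_mul_inv]

lemma tendsto_S :
    Tendsto (fun n : ℕ => ∑ i ∈ Finset.Icc 1 (n-1), ffun n i) atTop (nhds Real.pi) := by
  have hup : Tendsto (fun n : ℕ =>
      gfun n ((n:ℝ)-1) - gfun n 1 + 2 / Real.sqrt ((n:ℝ)-1)) atTop (nhds Real.pi) := by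
    simpa using tendsto_glower.add tendsto_err
  apply tendsto_of_tendsto_of_tendsto_of_le_of_le' tendsto_glower hup
  · filter_upwards [eventually_ge_atTop 4] with n hn
    exact sum_lower n hn
  · filter_upwards [eventually_ge_atTop 4] with n hn
    exact sum_upper n hn

/-- `GG(P_n) ~ π √(n-2)` as `n → ∞`, where
`GG(P_n) = Σ_{i=1}^{n-1} √((n-2)/(i(n-i)))`. -/
theorem stmt_6 :
    Tendsto (fun n : ℕ =>
        (∑ i ∈ Finset.Icc 1 (n - 1),
            Real.sqrt (((n : ℝ) - 2) / ((i : ℝ) * ((n : ℝ) - (i : ℝ))))) /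
          (Real.pi * Real.sqrt ((n : ℝ) - 2))) atTop (nhds 1) := by
  have h1 : Tendsto (fun n : ℕ => (∑ i ∈ Finset.Icc 1 (n-1), ffun n i) / Real.pi)
      atTop (nhds 1) := by
    have := tendsto_S.div_const Real.pi
    rwa [div_self Real.pi_ne_zero] at this
  apply h1.congr'
  filter_upwards [eventually_ge_atTop 3] with n hn
  have hn2 : (0:ℝ) < (n:ℝ) - 2 := by
    have : (3:ℝ) ≤ (n:ℝ) := by exact_mod_cast hn
    linarith
  have hsum : ∑ i ∈ Finset.Icc 1 (n-1),
      Real.sqrt (((n : ℝ) - 2) / ((i : ℝ) * ((n : ℝ) - (i : ℝ))))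
      = Real.sqrt ((n:ℝ)-2) * ∑ i ∈ Finset.Icc 1 (n-1), ffun n i := by
    rw [Finset.mul_sum]
    apply Finset.sum_congr rfl
    intro i _
    rw [Real.sqrt_div hn2.le]
    unfold ffun
    rw [div_eq_mul_one_div]
  rw [hsum, mul_comm Real.pi, mul_div_mul_left _ _ (by
    exact ne_of_gt (Real.sqrt_pos.2 hn2))]
end

section
/- For any connected bipartite graph G with bipartition sizes n₁ and n₂, NGG(G)² ≤ n₁ · n₂; consequently NGG(G) ≤ √(⌊n/2⌋⌈n/2⌉) where n = n₁ + n₂. -/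
open Finset Real
open scoped Classical

/-- In a (locally) bipartite graph, the degree of `u` bounds `closerCount G u v`
for any edge `uv`. -/
lemma degree_le_closerCount {V : Type*} [Fintype V] {G : SimpleGraph V}
    [DecidableRel G.Adj] (hconn : G.Connected) {U W : Finset V}
    (hdisj : Disjoint U W) (hcover : U ∪ W = Finset.univ)
    (hbip : ∀ u v : V, G.Adj u v → (u ∈ U ↔ v ∈ W))
    {u v : V} (h : G.Adj u v) : G.degree u ≤ closerCount G u v := by
  classical
  have hmem : ∀ x : V, (x ∈ U ∧ x ∉ W) ∨ (x ∈ W ∧ x ∉ U) := by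
    intro x
    have hx : x ∈ U ∪ W := by rw [hcover]; exact Finset.mem_univ x
    rcases Finset.mem_union.mp hx with h1 | h1
    · exact Or.inl ⟨h1, fun h2 => (Finset.disjoint_left.mp hdisj) h1 h2⟩
    · exact Or.inr ⟨h1, fun h2 => (Finset.disjoint_left.mp hdisj) h2 h1⟩
  have hsub : insert u ((G.neighborFinset u).erase v) ⊆
      Finset.univ.filter (fun w => G.dist w u < G.dist w v) := by
    intro w hw
    simp only [Finset.mem_insert, Finset.mem_erase, SimpleGraph.mem_neighborFinset] at hw
    simp only [Finset.mem_filter, Finset.mem_univ, true_and]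
    rcases hw with h' | ⟨hwv, hwu⟩
    · subst h'
      rw [SimpleGraph.dist_self]
      have : G.dist w v = 1 := SimpleGraph.dist_eq_one_iff_adj.mpr h
      omega
    · have h1 : G.dist w u = 1 := SimpleGraph.dist_eq_one_iff_adj.mpr hwu.symm
      have hnadj : ¬ G.Adj w v := by
        intro hadj
        have b1 := hbip u v h
        have b2 := hbip u w hwu
        have b3 := hbip w v hadj
        rcases hmem u with ⟨hu1, hu2⟩ | ⟨hu1, hu2⟩ <;>
          rcases hmem w with ⟨hw1, hw2⟩ | ⟨hw1, hw2⟩ <;>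
          rcases hmem v with ⟨hv1, hv2⟩ | ⟨hv1, hv2⟩ <;> tauto
      have h2 : 2 ≤ G.dist w v := by
        have hr : G.Reachable w v := hconn.preconnected w v
        have h0 : G.dist w v ≠ 0 := by
          rw [ne_eq, hr.dist_eq_zero_iff]; exact hwv
        have h1' : G.dist w v ≠ 1 := by
          intro hc
          exact hnadj (SimpleGraph.dist_eq_one_iff_adj.mp hc)
        omega
      omega
  have hcard : (insert u ((G.neighborFinset u).erase v)).card = G.degree u := by
    have hunv : u ∉ (G.neighborFinset u).erase v := by
      intro hc
      exact G.irrefl ((SimpleGraph.mem_neighborFinset G u u).mp (Finset.mem_of_mem_erase hc))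
    have hv : v ∈ G.neighborFinset u := (SimpleGraph.mem_neighborFinset G u v).mpr h
    rw [Finset.card_insert_of_notMem hunv, Finset.card_erase_of_mem hv]
    have : 1 ≤ (G.neighborFinset u).card := Finset.card_pos.mpr ⟨v, hv⟩
    simp only [SimpleGraph.degree]
    omega
  calc G.degree u = (insert u ((G.neighborFinset u).erase v)).card := hcard.symm
    _ ≤ _ := Finset.card_le_card hsub

/-- Generic bound: `Σ_{u ∈ X} Σ_{v ~ u} 1/n_u ≤ |X|`. -/
lemma sum_inv_closer_le {V : Type*} [Fintype V] (G : SimpleGraph V)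
    [DecidableRel G.Adj]
    (hd : ∀ u v : V, G.Adj u v → G.degree u ≤ closerCount G u v)
    (X : Finset V) :
    ∑ u ∈ X, ∑ v : V, (if G.Adj u v then ((closerCount G u v : ℝ))⁻¹ else 0)
      ≤ (X.card : ℝ) := by
  classical
  have step1 : ∀ u ∈ X, ∑ v : V, (if G.Adj u v then ((closerCount G u v : ℝ))⁻¹ else 0)
      ≤ ∑ v : V, (if G.Adj u v then ((G.degree u : ℝ))⁻¹ else 0) := by
    intro u _
    apply Finset.sum_le_sum
    intro v _
    by_cases hadj : G.Adj u v
    · simp only [hadj, if_true]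
      have hdeg : 0 < G.degree u := by
        rw [SimpleGraph.degree]
        exact Finset.card_pos.mpr ⟨v, (SimpleGraph.mem_neighborFinset G u v).mpr hadj⟩
      have h1 : (0 : ℝ) < G.degree u := by exact_mod_cast hdeg
      have h2 : (G.degree u : ℝ) ≤ closerCount G u v := by exact_mod_cast hd u v hadj
      exact inv_anti₀ h1 h2
    · simp [hadj]
  have step2 : ∀ u : V, ∑ v : V, (if G.Adj u v then ((G.degree u : ℝ))⁻¹ else 0)
      = (G.degree u : ℝ) * ((G.degree u : ℝ))⁻¹ := by
    intro u
    rw [← Finset.sum_filter, Finset.sum_const, nsmul_eq_mul,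
      ← SimpleGraph.neighborFinset_eq_filter]
    rfl
  calc ∑ u ∈ X, ∑ v : V, (if G.Adj u v then ((closerCount G u v : ℝ))⁻¹ else 0)
      ≤ ∑ u ∈ X, ∑ v : V, (if G.Adj u v then ((G.degree u : ℝ))⁻¹ else 0) :=
        Finset.sum_le_sum step1
    _ = ∑ u ∈ X, (G.degree u : ℝ) * ((G.degree u : ℝ))⁻¹ :=
        Finset.sum_congr rfl (fun u _ => step2 u)
    _ ≤ ∑ u ∈ X, (1 : ℝ) := by
        apply Finset.sum_le_sum
        intro u _
        by_cases hdeg : G.degree u = 0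
        · simp [hdeg]
        · rw [mul_inv_cancel₀ (by exact_mod_cast hdeg)]
    _ = (X.card : ℝ) := by simp

lemma nat_prod_le_half (a b : ℕ) : a * b ≤ ((a + b) / 2) * ((a + b + 1) / 2) := by
  set n := a + b with hn
  set q := n / 2 with hq
  set r := (n + 1) / 2 with hr
  have hqr : q + r = n := by omega
  rcases le_or_gt a q with hle | hlt
  · have h1 : a ≤ r := by omega
    have hb : b = q + r - a := by omega
    zify [show a ≤ q + r by omega] at *
    nlinarith [mul_nonneg (by omega : (0:ℤ) ≤ q - a) (by omega : (0:ℤ) ≤ r - a)]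
  · have h1 : r ≤ a := by omega
    have h2 : q ≤ a := by omega
    have hb : b = q + r - a := by omega
    zify [show a ≤ q + r by omega] at *
    nlinarith [mul_nonneg (by omega : (0:ℤ) ≤ a - q) (by omega : (0:ℤ) ≤ a - r)]

/-- For a connected bipartite graph with bipartition sizes `n₁, n₂`,
`NGG(G)² ≤ n₁ n₂`; consequently `NGG(G) ≤ √(⌊n/2⌋⌈n/2⌉)` where `n = n₁ + n₂`. -/
theorem stmt_9 {V : Type*} [Fintype V] (G : SimpleGraph V)
    (hconn : G.Connected) (U W : Finset V)
    (hdisj : Disjoint U W) (hcover : U ∪ W = Finset.univ)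
    (hbip : ∀ u v : V, G.Adj u v → (u ∈ U ↔ v ∈ W)) :
    NGG G ^ 2 ≤ (U.card : ℝ) * (W.card : ℝ) ∧
    NGG G ≤ Real.sqrt ((Fintype.card V / 2 : ℕ) * ((Fintype.card V + 1) / 2 : ℕ)) := by
  classical
  set f : V → V → ℝ := fun u v => if G.Adj u v then
      1 / Real.sqrt ((closerCount G u v : ℝ) * (closerCount G v u : ℝ)) else 0 with hf
  have hmem : ∀ x : V, (x ∈ U ∧ x ∉ W) ∨ (x ∈ W ∧ x ∉ U) := by
    intro x
    have hx : x ∈ U ∪ W := by rw [hcover]; exact Finset.mem_univ x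
    rcases Finset.mem_union.mp hx with h1 | h1
    · exact Or.inl ⟨h1, fun h2 => (Finset.disjoint_left.mp hdisj) h1 h2⟩
    · exact Or.inr ⟨h1, fun h2 => (Finset.disjoint_left.mp hdisj) h2 h1⟩
  have hd : ∀ u v : V, G.Adj u v → G.degree u ≤ closerCount G u v :=
    fun u v h => degree_le_closerCount hconn hdisj hcover hbip h
  have hfsymm : ∀ u v : V, f u v = f v u := by
    intro u v
    simp only [hf]
    by_cases h : G.Adj u v
    · rw [if_pos h, if_pos h.symm, mul_comm]
    · rw [if_neg h, if_neg (fun hc => h hc.symm)]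
  have hfnonneg : ∀ u v : V, 0 ≤ f u v := by
    intro u v
    simp only [hf]
    split_ifs
    · positivity
    · exact le_refl 0
  set A : ℝ := ∑ u ∈ U, ∑ v : V, f u v with hA
  -- NGG G = A
  have hNGG : NGG G = A := by
    have hsumW : ∑ u ∈ W, ∑ v : V, f u v = A := by
      calc ∑ u ∈ W, ∑ v : V, f u v
          = ∑ v : V, ∑ u ∈ W, f u v := Finset.sum_comm
        _ = ∑ v ∈ U, ∑ u ∈ W, f u v := by
            refine (Finset.sum_subset (Finset.subset_univ U) ?_).symm
            intro v _ hv
            apply Finset.sum_eq_zero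
            intro u hu
            simp only [hf]
            rw [if_neg]
            intro hadj
            have := (hbip u v hadj)
            rcases hmem v with ⟨hv1, _⟩ | ⟨hv1, hv2⟩
            · exact hv hv1
            · rcases hmem u with ⟨hu1, hu2⟩ | ⟨hu1, hu2⟩ <;> tauto
        _ = ∑ v ∈ U, ∑ u : V, f u v := by
            refine Finset.sum_congr rfl (fun v hv => ?_)
            refine Finset.sum_subset (Finset.subset_univ W) ?_
            intro u _ hu
            simp only [hf]
            rw [if_neg]
            intro hadj
            have := hbip u v hadj
            rcases hmem u with ⟨hu1, hu2⟩ | ⟨hu1, _⟩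
            · rcases hmem v with ⟨hv1, hv2⟩ | ⟨hv1, hv2⟩ <;> tauto
            · exact hu hu1
        _ = A := by
            rw [hA]
            refine Finset.sum_congr rfl (fun v _ => ?_)
            exact Finset.sum_congr rfl (fun u _ => hfsymm u v)
    have htot : ∑ u : V, ∑ v : V, f u v = A + A := by
      have hu := Finset.sum_union (f := fun u => ∑ v : V, f u v) hdisj
      rw [hcover] at hu
      rw [hu, hsumW, hA]
    rw [NGG, hA]
    rw [show (∑ u : V, ∑ v : V, if G.Adj u v then
      1 / Real.sqrt ((closerCount G u v : ℝ) * (closerCount G v u : ℝ)) else 0)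
      = ∑ u : V, ∑ v : V, f u v from rfl, htot]
    ring
  -- Cauchy-Schwarz setup
  set a : V × V → ℝ := fun p => if G.Adj p.1 p.2 then
      (Real.sqrt (closerCount G p.1 p.2))⁻¹ else 0 with ha
  set b : V × V → ℝ := fun p => if G.Adj p.1 p.2 then
      (Real.sqrt (closerCount G p.2 p.1))⁻¹ else 0 with hb
  set s : Finset (V × V) := U ×ˢ (Finset.univ : Finset V) with hs
  have hAab : A = ∑ p ∈ s, a p * b p := by
    rw [hA, hs, Finset.sum_product]
    refine Finset.sum_congr rfl (fun u _ => Finset.sum_congr rfl (fun v _ => ?_))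
    simp only [hf, ha, hb]
    by_cases h : G.Adj u v
    · rw [if_pos h, if_pos h, if_pos h, one_div,
        Real.sqrt_mul (by positivity : (0:ℝ) ≤ (closerCount G u v : ℝ)), mul_inv]
    · simp [h]
  have hCS : A ^ 2 ≤ (∑ p ∈ s, a p ^ 2) * (∑ p ∈ s, b p ^ 2) := by
    rw [hAab]
    exact Finset.sum_mul_sq_le_sq_mul_sq s a b
  -- bound on Σ a²
  have hsq : ∀ (u v : V), (if G.Adj u v then (Real.sqrt (closerCount G u v))⁻¹ else 0) ^ 2
      = if G.Adj u v then ((closerCount G u v : ℝ))⁻¹ else 0 := by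
    intro u v
    by_cases h : G.Adj u v
    · rw [if_pos h, if_pos h, inv_pow, Real.sq_sqrt (by positivity)]
    · simp [h]
  have ha2 : ∑ p ∈ s, a p ^ 2 ≤ (U.card : ℝ) := by
    have : ∑ p ∈ s, a p ^ 2
        = ∑ u ∈ U, ∑ v : V, (if G.Adj u v then ((closerCount G u v : ℝ))⁻¹ else 0) := by
      rw [hs, Finset.sum_product]
      exact Finset.sum_congr rfl (fun u _ => Finset.sum_congr rfl (fun v _ => hsq u v))
    rw [this]
    exact sum_inv_closer_le G hd U
  -- bound on Σ b²
  have hb2 : ∑ p ∈ s, b p ^ 2 ≤ (W.card : ℝ) := by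
    have h1 : ∑ p ∈ s, b p ^ 2
        = ∑ u ∈ U, ∑ v : V, (if G.Adj u v then ((closerCount G v u : ℝ))⁻¹ else 0) := by
      rw [hs, Finset.sum_product]
      refine Finset.sum_congr rfl (fun u _ => Finset.sum_congr rfl (fun v _ => ?_))
      simp only [hb]
      by_cases h : G.Adj u v
      · rw [if_pos h, if_pos h, inv_pow, Real.sq_sqrt (by positivity)]
      · simp [h]
    have h2 : ∑ u ∈ U, ∑ v : V, (if G.Adj u v then ((closerCount G v u : ℝ))⁻¹ else 0)
        = ∑ v ∈ W, ∑ u : V, (if G.Adj v u then ((closerCount G v u : ℝ))⁻¹ else 0) := by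
      calc ∑ u ∈ U, ∑ v : V, (if G.Adj u v then ((closerCount G v u : ℝ))⁻¹ else 0)
          = ∑ v : V, ∑ u ∈ U, (if G.Adj u v then ((closerCount G v u : ℝ))⁻¹ else 0) :=
            Finset.sum_comm
        _ = ∑ v ∈ W, ∑ u ∈ U, (if G.Adj u v then ((closerCount G v u : ℝ))⁻¹ else 0) := by
            refine (Finset.sum_subset (Finset.subset_univ W) ?_).symm
            intro v _ hv
            apply Finset.sum_eq_zero
            intro u hu
            rw [if_neg]
            intro hadj
            have := hbip u v hadj
            tauto
        _ = ∑ v ∈ W, ∑ u : V, (if G.Adj u v then ((closerCount G v u : ℝ))⁻¹ else 0) := by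
            refine Finset.sum_congr rfl (fun v hv => ?_)
            refine Finset.sum_subset (Finset.subset_univ U) ?_
            intro u _ hu
            rw [if_neg]
            intro hadj
            have := hbip u v hadj
            rcases hmem u with ⟨hu1, hu2⟩ | ⟨hu1, hu2⟩
            · exact hu hu1
            · rcases hmem v with ⟨hv1, hv2⟩ | ⟨hv1, hv2⟩ <;> tauto
        _ = ∑ v ∈ W, ∑ u : V, (if G.Adj v u then ((closerCount G v u : ℝ))⁻¹ else 0) := by
            refine Finset.sum_congr rfl (fun v _ => Finset.sum_congr rfl (fun u _ => ?_))
            by_cases h : G.Adj u v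
            · rw [if_pos h, if_pos h.symm]
            · rw [if_neg h, if_neg (fun hc => h hc.symm)]
    rw [h1, h2]
    exact sum_inv_closer_le G hd W
  have hUW : NGG G ^ 2 ≤ (U.card : ℝ) * (W.card : ℝ) := by
    rw [hNGG]
    calc A ^ 2 ≤ (∑ p ∈ s, a p ^ 2) * (∑ p ∈ s, b p ^ 2) := hCS
      _ ≤ (U.card : ℝ) * (W.card : ℝ) := by
          apply mul_le_mul ha2 hb2 ?_ ?_
          · exact Finset.sum_nonneg (fun p _ => sq_nonneg _)
          · exact Nat.cast_nonneg _
  refine ⟨hUW, ?_⟩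
  have hNGGnn : 0 ≤ NGG G := by
    rw [NGG]
    apply div_nonneg _ (by norm_num)
    exact Finset.sum_nonneg (fun u _ => Finset.sum_nonneg (fun v _ => hfnonneg u v))
  have hcard : U.card + W.card = Fintype.card V := by
    rw [← Finset.card_union_of_disjoint hdisj, hcover, Finset.card_univ]
  have hle : (U.card : ℝ) * (W.card : ℝ)
      ≤ ((Fintype.card V / 2 : ℕ) * ((Fintype.card V + 1) / 2 : ℕ) : ℝ) := by
    have := nat_prod_le_half U.card W.card
    rw [hcard] at this
    exact_mod_cast this
  rw [Real.le_sqrt hNGGnn (by positivity)]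
  exact le_trans hUW hle
end

section
/- For all even n ≥ 8, Σ_{i=1}^{n−1} 1/√(i(n−i)) > 2; that is, NGG(P_n) > NGG(C_n). -/
/-- For all even `n ≥ 8`, `Σ_{i=1}^{n-1} 1/√(i(n-i)) > 2`, i.e.
`NGG(P_n) > NGG(C_n)`. -/
theorem stmt_13 (n : ℕ) (hn : 8 ≤ n) (heven : Even n) :
    (2 : ℝ) < ∑ i ∈ Finset.Icc 1 (n - 1), 1 / Real.sqrt ((i : ℝ) * ((n : ℝ) - (i : ℝ))) := by
  have hn8 : (8:ℝ) ≤ (n:ℝ) := by exact_mod_cast hn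
  have hnpos : (0:ℝ) < n := by linarith
  set s : ℝ := Real.sqrt ((n:ℝ) - 1) with hs
  have hs2 : s ^ 2 = (n:ℝ) - 1 := Real.sq_sqrt (by linarith)
  have hspos : 0 < s := Real.sqrt_pos.mpr (by linarith)
  have hsplit : Finset.Icc 1 (n-1) = insert 1 (insert (n-1) (Finset.Icc 2 (n-2))) := by
    ext i
    simp only [Finset.mem_Icc, Finset.mem_insert]
    omega
  rw [hsplit, Finset.sum_insert (by simp only [Finset.mem_insert, Finset.mem_Icc]; omega),
    Finset.sum_insert (by simp only [Finset.mem_Icc]; omega)]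
  have hcast : ((n-1 : ℕ) : ℝ) = (n:ℝ) - 1 := by
    have : 1 ≤ n := by omega
    push_cast [this]; ring
  have ht1 : 1 / Real.sqrt ((1:ℕ) * ((n:ℝ) - (1:ℕ))) = 1 / s := by
    norm_num
    exact hs.symm
  have ht2 : 1 / Real.sqrt (((n-1:ℕ):ℝ) * ((n:ℝ) - ((n-1:ℕ):ℝ))) = 1 / s := by
    rw [hcast, show ((n:ℝ)-1) * ((n:ℝ) - ((n:ℝ)-1)) = (n:ℝ)-1 from by ring, hs]
  rw [ht1, ht2]
  -- bound on remaining terms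
  have hrest : ((n:ℝ) - 3) * (2 / n) ≤
      ∑ i ∈ Finset.Icc 2 (n-2), 1 / Real.sqrt ((i : ℝ) * ((n : ℝ) - (i : ℝ))) := by
    have hb : ∀ i ∈ Finset.Icc 2 (n-2), (2:ℝ)/n ≤ 1 / Real.sqrt ((i : ℝ) * ((n : ℝ) - (i : ℝ))) := by
      intro i hi
      simp only [Finset.mem_Icc] at hi
      have hi1 : (1:ℝ) ≤ (i:ℝ) := by exact_mod_cast Nat.one_le_cast.mpr (by omega)
      have hi2 : (i:ℝ) ≤ (n:ℝ) - 1 := by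
        have h' : (i:ℝ) ≤ ((n-1:ℕ):ℝ) := Nat.cast_le.mpr (by omega)
        rw [hcast] at h'; exact h'
      have hprodpos : 0 < (i:ℝ) * ((n:ℝ) - i) := by nlinarith
      have hle : (i:ℝ) * ((n:ℝ) - i) ≤ ((n:ℝ)/2)^2 := by nlinarith [sq_nonneg ((i:ℝ) - n/2)]
      have hsqrtle : Real.sqrt ((i:ℝ) * ((n:ℝ) - i)) ≤ (n:ℝ)/2 := by
        calc Real.sqrt ((i:ℝ) * ((n:ℝ) - i)) ≤ Real.sqrt (((n:ℝ)/2)^2) := Real.sqrt_le_sqrt hle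
        _ = (n:ℝ)/2 := Real.sqrt_sq (by linarith)
      have hsqrtpos : 0 < Real.sqrt ((i:ℝ) * ((n:ℝ) - i)) := Real.sqrt_pos.mpr hprodpos
      have := one_div_le_one_div_of_le hsqrtpos hsqrtle
      have h2n : (1:ℝ) / ((n:ℝ)/2) = 2/n := by field_simp
      linarith [h2n ▸ this]
    have hcard : (Finset.Icc 2 (n-2)).card = n - 3 := by
      rw [Nat.card_Icc]; omega
    have := Finset.card_nsmul_le_sum (Finset.Icc 2 (n-2))
      (fun i => 1 / Real.sqrt ((i : ℝ) * ((n : ℝ) - (i : ℝ)))) ((2:ℝ)/n) hb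
    rw [hcard, nsmul_eq_mul] at this
    have hc3 : ((n-3 : ℕ) : ℝ) = (n:ℝ) - 3 := by
      have : 3 ≤ n := by omega
      push_cast [this]; ring
    rw [hc3] at this
    exact this
  -- final algebra: 2 < 2/s + (n-3)*(2/n)
  have h3s : 3 * s < (n:ℝ) := by nlinarith [sq_nonneg (2*s - 5)]
  have hkey : (6:ℝ)/n < 2 * (1/s) := by
    rw [mul_one_div, div_lt_div_iff₀ hnpos hspos]; linarith
  have heq : ((n:ℝ) - 3) * (2 / n) = 2 - 6/n := by field_simp; ring
  rw [heq] at hrest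
  linarith
end

section
/- For all integers k ≥ 4, Σ_{i=1}^{2k} 1/√(i(2k+1−i)) > 1/√(2k) + 2k/√(k(k+1)); that is, NGG(P_n) > NGG(C'_n) for odd n = 2k+1 ≥ 9. -/
lemma sqrt_div_le' (p q x y : ℝ) (hx : 0 < x) (hy : 0 < y)
    (hp : 0 ≤ p) (hq : 0 ≤ q) (h : p^2 * x ≤ q^2 * y) :
    p / Real.sqrt y ≤ q / Real.sqrt x := by
  rw [div_le_div_iff₀ (Real.sqrt_pos.mpr hy) (Real.sqrt_pos.mpr hx)]
  have e1 : p * Real.sqrt x = Real.sqrt (p^2 * x) := by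
    rw [Real.sqrt_mul (by positivity), Real.sqrt_sq hp]
  have e2 : q * Real.sqrt y = Real.sqrt (q^2 * y) := by
    rw [Real.sqrt_mul (by positivity), Real.sqrt_sq hq]
  rw [e1, e2]
  exact Real.sqrt_le_sqrt h

lemma sqrt_div_lt' (p q x y : ℝ) (hx : 0 < x) (hy : 0 < y)
    (hp : 0 ≤ p) (hq : 0 ≤ q) (h : p^2 * x < q^2 * y) :
    p / Real.sqrt y < q / Real.sqrt x := by
  rw [div_lt_div_iff₀ (Real.sqrt_pos.mpr hy) (Real.sqrt_pos.mpr hx)]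
  have e1 : p * Real.sqrt x = Real.sqrt (p^2 * x) := by
    rw [Real.sqrt_mul (by positivity), Real.sqrt_sq hp]
  have e2 : q * Real.sqrt y = Real.sqrt (q^2 * y) := by
    rw [Real.sqrt_mul (by positivity), Real.sqrt_sq hq]
  rw [e1, e2]
  exact Real.sqrt_lt_sqrt (by positivity) h

lemma lb' (r p x : ℝ) (hx : 0 < x) (hr : 0 ≤ r) (hp : 0 ≤ p) (h : r^2 * x < p^2) :
    r < p / Real.sqrt x := by
  rw [lt_div_iff₀ (Real.sqrt_pos.mpr hx)]
  have e : r * Real.sqrt x = Real.sqrt (r^2 * x) := by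
    rw [Real.sqrt_mul (by positivity), Real.sqrt_sq hr]
  rw [e, ← Real.sqrt_sq hp]
  exact Real.sqrt_lt_sqrt (by positivity) h

lemma ub' (q s y : ℝ) (hy : 0 < y) (hq : 0 ≤ q) (hs : 0 ≤ s) (h : q^2 < s^2 * y) :
    q / Real.sqrt y < s := by
  rw [div_lt_iff₀ (Real.sqrt_pos.mpr hy)]
  have e : s * Real.sqrt y = Real.sqrt (s^2 * y) := by
    rw [Real.sqrt_mul (by positivity), Real.sqrt_sq hs]
  rw [e, ← Real.sqrt_sq hq]
  exact Real.sqrt_lt_sqrt (by positivity) h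

lemma aux_ineq (k : ℕ) (hk : 4 ≤ k) :
    6 / Real.sqrt ((k : ℝ) * ((k : ℝ) + 1)) <
      1 / Real.sqrt (2 * (k : ℝ)) + 2 / Real.sqrt (4 * (k : ℝ) - 2) +
        2 / Real.sqrt (6 * (k : ℝ) - 6) := by
  rcases le_or_gt 8 k with h8 | h8
  · have hK : (8 : ℝ) ≤ (k : ℝ) := by exact_mod_cast h8
    have h1 : 2 / Real.sqrt ((k : ℝ) * ((k : ℝ) + 1)) < 1 / Real.sqrt (2 * (k : ℝ)) :=
      sqrt_div_lt' 2 1 (2 * (k : ℝ)) ((k : ℝ) * ((k : ℝ) + 1)) (by linarith) (by nlinarith)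
        (by norm_num) (by norm_num) (by nlinarith)
    have h2 : 2 / Real.sqrt ((k : ℝ) * ((k : ℝ) + 1)) ≤ 2 / Real.sqrt (4 * (k : ℝ) - 2) :=
      sqrt_div_le' 2 2 (4 * (k : ℝ) - 2) ((k : ℝ) * ((k : ℝ) + 1)) (by linarith) (by nlinarith)
        (by norm_num) (by norm_num) (by nlinarith)
    have h3 : 2 / Real.sqrt ((k : ℝ) * ((k : ℝ) + 1)) ≤ 2 / Real.sqrt (6 * (k : ℝ) - 6) :=
      sqrt_div_le' 2 2 (6 * (k : ℝ) - 6) ((k : ℝ) * ((k : ℝ) + 1)) (by linarith) (by nlinarith)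
        (by norm_num) (by norm_num) (by nlinarith)
    have e : (6 : ℝ) / Real.sqrt ((k : ℝ) * ((k : ℝ) + 1)) =
        2 / Real.sqrt ((k : ℝ) * ((k : ℝ) + 1)) + 2 / Real.sqrt ((k : ℝ) * ((k : ℝ) + 1)) +
          2 / Real.sqrt ((k : ℝ) * ((k : ℝ) + 1)) := by ring
    linarith
  · interval_cases k
    · norm_num
      rw [← one_div]
      have a1 : (0.353 : ℝ) < 1 / Real.sqrt 8 := lb' _ _ _ (by norm_num) (by norm_num) (by norm_num) (by norm_num)
      have a2 : (0.534 : ℝ) < 2 / Real.sqrt 14 := lb' _ _ _ (by norm_num) (by norm_num) (by norm_num) (by norm_num)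
      have a3 : (0.471 : ℝ) < 2 / Real.sqrt 18 := lb' _ _ _ (by norm_num) (by norm_num) (by norm_num) (by norm_num)
      have a4 : (6 : ℝ) / Real.sqrt 20 < 1.342 := ub' _ _ _ (by norm_num) (by norm_num) (by norm_num) (by norm_num)
      linarith
    · norm_num
      rw [← one_div]
      have a1 : (0.316 : ℝ) < 1 / Real.sqrt 10 := lb' _ _ _ (by norm_num) (by norm_num) (by norm_num) (by norm_num)
      have a2 : (0.471 : ℝ) < 2 / Real.sqrt 18 := lb' _ _ _ (by norm_num) (by norm_num) (by norm_num) (by norm_num)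
      have a3 : (0.408 : ℝ) < 2 / Real.sqrt 24 := lb' _ _ _ (by norm_num) (by norm_num) (by norm_num) (by norm_num)
      have a4 : (6 : ℝ) / Real.sqrt 30 < 1.096 := ub' _ _ _ (by norm_num) (by norm_num) (by norm_num) (by norm_num)
      linarith
    · norm_num
      rw [← one_div]
      have a1 : (0.288 : ℝ) < 1 / Real.sqrt 12 := lb' _ _ _ (by norm_num) (by norm_num) (by norm_num) (by norm_num)
      have a2 : (0.426 : ℝ) < 2 / Real.sqrt 22 := lb' _ _ _ (by norm_num) (by norm_num) (by norm_num) (by norm_num)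
      have a3 : (0.365 : ℝ) < 2 / Real.sqrt 30 := lb' _ _ _ (by norm_num) (by norm_num) (by norm_num) (by norm_num)
      have a4 : (6 : ℝ) / Real.sqrt 42 < 0.926 := ub' _ _ _ (by norm_num) (by norm_num) (by norm_num) (by norm_num)
      linarith
    · norm_num
      rw [← one_div]
      have a1 : (0.267 : ℝ) < 1 / Real.sqrt 14 := lb' _ _ _ (by norm_num) (by norm_num) (by norm_num) (by norm_num)
      have a2 : (0.392 : ℝ) < 2 / Real.sqrt 26 := lb' _ _ _ (by norm_num) (by norm_num) (by norm_num) (by norm_num)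
      have a3 : (0.333 : ℝ) < 2 / Real.sqrt 36 := lb' _ _ _ (by norm_num) (by norm_num) (by norm_num) (by norm_num)
      have a4 : (6 : ℝ) / Real.sqrt 56 < 0.802 := ub' _ _ _ (by norm_num) (by norm_num) (by norm_num) (by norm_num)
      linarith

lemma term_bd (k i : ℕ) (hk : 4 ≤ k) (h1 : 1 ≤ i) (h2 : i ≤ 2 * k) :
    1 / Real.sqrt ((k : ℝ) * ((k : ℝ) + 1)) ≤
      1 / Real.sqrt ((i : ℝ) * (2 * (k : ℝ) + 1 - (i : ℝ))) := by
  have hi1 : (1 : ℝ) ≤ (i : ℝ) := by exact_mod_cast h1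
  have hi2 : (i : ℝ) ≤ 2 * (k : ℝ) := by exact_mod_cast h2
  have hK : (4 : ℝ) ≤ (k : ℝ) := by exact_mod_cast hk
  have hx : 0 < (i : ℝ) * (2 * (k : ℝ) + 1 - (i : ℝ)) := by nlinarith
  have hle : (i : ℝ) * (2 * (k : ℝ) + 1 - (i : ℝ)) ≤ (k : ℝ) * ((k : ℝ) + 1) := by
    rcases le_or_gt i k with h | h
    · have : (i : ℝ) ≤ (k : ℝ) := by exact_mod_cast h
      nlinarith
    · have : (k : ℝ) + 1 ≤ (i : ℝ) := by exact_mod_cast h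
      nlinarith
  exact sqrt_div_le' 1 1 _ _ hx (by nlinarith) (by norm_num) (by norm_num) (by nlinarith)

/-- For all integers `k ≥ 4`,
`Σ_{i=1}^{2k} 1/√(i(2k+1-i)) > 1/√(2k) + 2k/√(k(k+1))`;
i.e. `NGG(P_n) > NGG(C'_n)` for odd `n = 2k+1 ≥ 9`. -/
theorem stmt_19 (k : ℕ) (hk : 4 ≤ k) :
    1 / Real.sqrt (2 * (k : ℝ)) + 2 * (k : ℝ) / Real.sqrt ((k : ℝ) * ((k : ℝ) + 1)) <
      ∑ i ∈ Finset.Icc 1 (2 * k),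
        1 / Real.sqrt ((i : ℝ) * (2 * (k : ℝ) + 1 - (i : ℝ))) := by
  set f : ℕ → ℝ := fun i => 1 / Real.sqrt ((i : ℝ) * (2 * (k : ℝ) + 1 - (i : ℝ))) with hf
  have hK : (4 : ℝ) ≤ (k : ℝ) := by exact_mod_cast hk
  -- values of the boundary terms
  have hf1 : f 1 = 1 / Real.sqrt (2 * (k : ℝ)) := by
    simp only [hf]
    rw [show ((1 : ℕ) : ℝ) * (2 * (k : ℝ) + 1 - ((1 : ℕ) : ℝ)) = 2 * (k : ℝ) by push_cast; ring]
  have hf2 : f 2 = 1 / Real.sqrt (4 * (k : ℝ) - 2) := by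
    simp only [hf]
    rw [show ((2 : ℕ) : ℝ) * (2 * (k : ℝ) + 1 - ((2 : ℕ) : ℝ)) = 4 * (k : ℝ) - 2 by push_cast; ring]
  have hf3 : f 3 = 1 / Real.sqrt (6 * (k : ℝ) - 6) := by
    simp only [hf]
    rw [show ((3 : ℕ) : ℝ) * (2 * (k : ℝ) + 1 - ((3 : ℕ) : ℝ)) = 6 * (k : ℝ) - 6 by push_cast; ring]
  have c2 : ((2 * k - 2 : ℕ) : ℝ) = 2 * (k : ℝ) - 2 := by
    have h2 : 2 ≤ 2 * k := by omega
    push_cast [Nat.cast_sub h2]; ring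
  have c1 : ((2 * k - 1 : ℕ) : ℝ) = 2 * (k : ℝ) - 1 := by
    have h2 : 1 ≤ 2 * k := by omega
    push_cast [Nat.cast_sub h2]; ring
  have hf4 : f (2 * k - 2) = 1 / Real.sqrt (6 * (k : ℝ) - 6) := by
    simp only [hf, c2]
    rw [show (2 * (k : ℝ) - 2) * (2 * (k : ℝ) + 1 - (2 * (k : ℝ) - 2)) = 6 * (k : ℝ) - 6 by ring]
  have hf5 : f (2 * k - 1) = 1 / Real.sqrt (4 * (k : ℝ) - 2) := by
    simp only [hf, c1]
    rw [show (2 * (k : ℝ) - 1) * (2 * (k : ℝ) + 1 - (2 * (k : ℝ) - 1)) = 4 * (k : ℝ) - 2 by ring]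
  have hf6 : f (2 * k) = 1 / Real.sqrt (2 * (k : ℝ)) := by
    simp only [hf]
    rw [show ((2 * k : ℕ) : ℝ) * (2 * (k : ℝ) + 1 - ((2 * k : ℕ) : ℝ)) = 2 * (k : ℝ) by push_cast; ring]
  -- splitting the index set
  have hsplit : Finset.Icc 1 (2 * k) =
      insert 1 (insert 2 (insert 3 (insert (2 * k - 2) (insert (2 * k - 1)
        (insert (2 * k) (Finset.Icc 4 (2 * k - 3))))))) := by
    ext x
    simp only [Finset.mem_Icc, Finset.mem_insert]
    omega
  have hsum : ∑ i ∈ Finset.Icc 1 (2 * k), f i =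
      f 1 + f 2 + f 3 + f (2 * k - 2) + f (2 * k - 1) + f (2 * k) +
        ∑ i ∈ Finset.Icc 4 (2 * k - 3), f i := by
    rw [hsplit,
      Finset.sum_insert (by simp only [Finset.mem_insert, Finset.mem_Icc]; omega),
      Finset.sum_insert (by simp only [Finset.mem_insert, Finset.mem_Icc]; omega),
      Finset.sum_insert (by simp only [Finset.mem_insert, Finset.mem_Icc]; omega),
      Finset.sum_insert (by simp only [Finset.mem_insert, Finset.mem_Icc]; omega),
      Finset.sum_insert (by simp only [Finset.mem_insert, Finset.mem_Icc]; omega),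
      Finset.sum_insert (by simp only [Finset.mem_Icc]; omega)]
    ring
  -- lower bound for the middle part
  have hmid : (2 * (k : ℝ) - 6) * (1 / Real.sqrt ((k : ℝ) * ((k : ℝ) + 1))) ≤
      ∑ i ∈ Finset.Icc 4 (2 * k - 3), f i := by
    have hcard : (Finset.Icc 4 (2 * k - 3)).card = 2 * k - 6 := by
      rw [Nat.card_Icc]; omega
    have := Finset.card_nsmul_le_sum (Finset.Icc 4 (2 * k - 3)) f
      (1 / Real.sqrt ((k : ℝ) * ((k : ℝ) + 1)))
      (fun i hi => by
        simp only [Finset.mem_Icc] at hi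
        exact term_bd k i hk (by omega) (by omega))
    rw [hcard, nsmul_eq_mul] at this
    have hc : ((2 * k - 6 : ℕ) : ℝ) = 2 * (k : ℝ) - 6 := by
      have h6 : 6 ≤ 2 * k := by omega
      push_cast [Nat.cast_sub h6]; ring
    rw [hc] at this
    exact this
  rw [hsum, hf1, hf2, hf3, hf4, hf5, hf6]
  have haux := aux_ineq k hk
  have hd : 0 < Real.sqrt ((k : ℝ) * ((k : ℝ) + 1)) := Real.sqrt_pos.mpr (by nlinarith)
  have hsplit6 : 2 * (k : ℝ) / Real.sqrt ((k : ℝ) * ((k : ℝ) + 1)) =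
      (2 * (k : ℝ) - 6) * (1 / Real.sqrt ((k : ℝ) * ((k : ℝ) + 1))) +
        6 / Real.sqrt ((k : ℝ) * ((k : ℝ) + 1)) := by ring
  have e1 : 2 / Real.sqrt (4 * (k : ℝ) - 2) = 1 / Real.sqrt (4 * (k : ℝ) - 2) + 1 / Real.sqrt (4 * (k : ℝ) - 2) := by ring
  have e2 : 2 / Real.sqrt (6 * (k : ℝ) - 6) = 1 / Real.sqrt (6 * (k : ℝ) - 6) + 1 / Real.sqrt (6 * (k : ℝ) - 6) := by ring
  linarith
end
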